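/- For words w, v over a finite alphabet Σ and n ≥ 2, if w = v is a semigroup identity for the semigroup UT_n of n×n upper triangular matrices over the tropical semiring, then the reversed words rev(w) = rev(v) is also a semigroup identity for UT_n. -/

import Mathlib

/-- Tropical (max-plus) matrix multiplication over `ℝ ∪ {-∞}`. -/
noncomputable def tmul {n : ℕ} (A B : Matrix (Fin n) (Fin n) EReal) :
    Matrix (Fin n) (Fin n) EReal :=
  fun i j => ⨆ k, A i k + B k j

/-- The tropical identity matrix: `0` on the diagonal, `-∞` elsewhere. -/
noncomputable def tOne {n : ℕ} : Matrix (Fin n) (Fin n) EReal :=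
  fun i j => if i = j then 0 else ⊥

/-- Tropical product of a list of matrices. -/
noncomputable def tProd {n : ℕ} (l : List (Matrix (Fin n) (Fin n) EReal)) :
    Matrix (Fin n) (Fin n) EReal :=
  l.foldr tmul tOne

/-- A matrix is upper triangular if all entries below the diagonal are `-∞`. -/
def IsUT {n : ℕ} (A : Matrix (Fin n) (Fin n) EReal) : Prop :=
  ∀ i j : Fin n, j < i → A i j = ⊥

/-- `w = v` is a semigroup identity for `UT_n`: every assignment of upper
triangular tropical matrices to the letters gives equal products. -/
noncomputable def UTId (n : ℕ) {σ : Type*} (w v : List σ) : Prop :=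
  ∀ φ : σ → Matrix (Fin n) (Fin n) EReal, (∀ s, IsUT (φ s)) →
    tProd (w.map φ) = tProd (v.map φ)

section Aux

lemma my_add_iSup {ι : Type*} [Fintype ι] [Nonempty ι] (x : EReal) (f : ι → EReal) :
    x + ⨆ k, f k = ⨆ k, x + f k := by
  obtain ⟨i, hi⟩ := Finite.exists_max f
  have h1 : (⨆ k, f k) = f i := le_antisymm (iSup_le hi) (le_iSup f i)
  rw [h1]
  refine le_antisymm (le_iSup (fun k => x + f k) i) (iSup_le fun k => ?_)
  exact add_le_add le_rfl (hi k)

lemma my_iSup_add {ι : Type*} [Fintype ι] [Nonempty ι] (x : EReal) (f : ι → EReal) :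
    (⨆ k, f k) + x = ⨆ k, f k + x := by
  simp only [add_comm _ x, my_add_iSup]

lemma tmul_assoc {n : ℕ} [NeZero n] (A B C : Matrix (Fin n) (Fin n) EReal) :
    tmul (tmul A B) C = tmul A (tmul B C) := by
  funext i j
  simp only [tmul, my_iSup_add, my_add_iSup]
  rw [iSup_comm]
  exact iSup_congr fun l => iSup_congr fun k => (add_assoc _ _ _)

lemma tmul_tOne {n : ℕ} (A : Matrix (Fin n) (Fin n) EReal) : tmul A tOne = A := by
  funext i j
  refine le_antisymm (iSup_le fun k => ?_) ?_
  · simp only [tOne]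
    rcases eq_or_ne k j with rfl | hk
    · simp
    · simp [hk]
  · have := le_iSup (fun k => A i k + tOne k j) j
    simpa [tOne, tmul] using this

lemma tOne_tmul {n : ℕ} (A : Matrix (Fin n) (Fin n) EReal) : tmul tOne A = A := by
  funext i j
  refine le_antisymm (iSup_le fun k => ?_) ?_
  · simp only [tOne]
    rcases eq_or_ne i k with rfl | hk
    · simp
    · simp [hk]
  · have := le_iSup (fun k => tOne i k + A k j) i
    simpa [tOne, tmul] using this

/-- Flip along the anti-diagonal. -/
noncomputable def antiT {n : ℕ} (A : Matrix (Fin n) (Fin n) EReal) :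
    Matrix (Fin n) (Fin n) EReal :=
  fun i j => A j.rev i.rev

lemma antiT_antiT {n : ℕ} (A : Matrix (Fin n) (Fin n) EReal) : antiT (antiT A) = A := by
  funext i j; simp [antiT]

lemma antiT_tOne {n : ℕ} : antiT (tOne (n := n)) = tOne := by
  funext i j
  simp only [antiT, tOne]
  by_cases h : i = j
  · simp [h]
  · rw [if_neg h, if_neg]
    intro hrev
    exact h (Fin.rev_injective hrev).symm

lemma antiT_tmul {n : ℕ} (A B : Matrix (Fin n) (Fin n) EReal) :
    antiT (tmul A B) = tmul (antiT B) (antiT A) := by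
  funext i j
  simp only [antiT, tmul]
  have hsurj : Function.Surjective (Fin.rev : Fin n → Fin n) :=
    Function.Involutive.surjective Fin.rev_rev
  rw [← hsurj.iSup_comp (g := fun k => A j.rev k + B k i.rev)]
  exact iSup_congr fun k => add_comm _ _

lemma antiT_isUT {n : ℕ} (A : Matrix (Fin n) (Fin n) EReal) (hA : IsUT A) :
    IsUT (antiT A) := by
  intro i j hij
  exact hA j.rev i.rev (by simpa using Fin.rev_lt_rev.mpr hij)

lemma tProd_append_singleton {n : ℕ} [NeZero n] (l : List (Matrix (Fin n) (Fin n) EReal))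
    (b : Matrix (Fin n) (Fin n) EReal) :
    tProd (l ++ [b]) = tmul (tProd l) b := by
  induction l with
  | nil => simp [tProd, tmul_tOne, tOne_tmul]
  | cons a l ih =>
      simp only [List.cons_append, tProd, List.foldr_cons] at *
      rw [ih, tmul_assoc]

lemma antiT_tProd {n : ℕ} [NeZero n] (l : List (Matrix (Fin n) (Fin n) EReal)) :
    antiT (tProd l) = tProd (l.reverse.map antiT) := by
  induction l with
  | nil => simp [tProd, antiT_tOne]
  | cons a l ih =>
      have : tProd (a :: l) = tmul a (tProd l) := rfl
      rw [this, antiT_tmul, ih, List.reverse_cons, List.map_append,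
        List.map_singleton, tProd_append_singleton]

end Aux

/-- If `w ∼_n v` then `rev(w) ∼_n rev(v)`. -/
theorem utId_reverse {σ : Type*} [Fintype σ] (n : ℕ) (hn : 2 ≤ n)
    (w v : List σ) (hw : w ≠ []) (hv : v ≠ []) (h : UTId n w v) :
    UTId n w.reverse v.reverse := by
  have : NeZero n := ⟨by omega⟩
  intro φ hφ
  have hψ := h (fun s => antiT (φ s)) (fun s => antiT_isUT _ (hφ s))
  have key : ∀ u : List σ,
      tProd (u.reverse.map φ) = antiT (tProd (u.map fun s => antiT (φ s))) := by
    intro u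
    rw [antiT_tProd]
    have h2 : (antiT ∘ fun s => antiT (φ s)) = φ := funext fun s => antiT_antiT (φ s)
    conv_rhs => rw [← List.map_reverse, List.map_map, h2]
  rw [key w, key v, hψ]
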